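/- arXiv:1805.04018 — 3 statements merged into one kernel-verified Lean document; each statement's English description precedes it below -/
import Mathlib

section
/- Representer theorem: Let H be a real Hilbert space, v₁,…,v_N ∈ H, and let L : ℝ^N → ℝ be any function and Ω : ℝ → ℝ strictly increasing. If w* minimizes w ↦ L(⟨w,v₁⟩,…,⟨w,v_N⟩) + Ω(‖w‖) over H, then w* lies in the span of {v₁,…,v_N}. -/
theorem representer_theorem
    {H : Type*} [NormedAddCommGroup H] [InnerProductSpace ℝ H] [CompleteSpace H]
    {N : ℕ} (v : Fin N → H)
    (L : (Fin N → ℝ) → ℝ) (Ω : ℝ → ℝ) (hΩ : StrictMono Ω)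
    (w_star : H)
    (hmin : ∀ w : H,
      L (fun i => (inner ℝ w_star (v i) : ℝ)) + Ω ‖w_star‖ ≤
        L (fun i => (inner ℝ w (v i) : ℝ)) + Ω ‖w‖) :
    w_star ∈ Submodule.span ℝ (Set.range v) := by
  set S := Submodule.span ℝ (Set.range v) with hS
  haveI : FiniteDimensional ℝ S := by
    apply FiniteDimensional.span_of_finite
    exact Set.finite_range v
  haveI : S.HasOrthogonalProjection := inferInstance
  set p : H := (S.orthogonalProjectionOnto w_star : H) with hp
  have hpS : p ∈ S := (S.orthogonalProjectionOnto w_star).2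
  have horth : w_star - p ∈ Sᗮ := Submodule.sub_starProjection_mem_orthogonal (K := S) w_star
  have hinner : ∀ i, (inner ℝ p (v i) : ℝ) = inner ℝ w_star (v i) := by
    intro i
    have hvi : v i ∈ S := Submodule.subset_span ⟨i, rfl⟩
    have h0 : (inner ℝ (w_star - p) (v i) : ℝ) = 0 := by
      have := horth (v i) hvi
      rwa [real_inner_comm] at this
    rw [inner_sub_left] at h0
    linarith
  have hpyth : ‖w_star‖ ^ 2 = ‖p‖ ^ 2 + ‖w_star - p‖ ^ 2 := by
    have h0 : (inner ℝ p (w_star - p) : ℝ) = 0 := horth p hpS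
    have := norm_add_sq_real p (w_star - p)
    simp only [add_sub_cancel] at this
    rw [this, h0]
    ring
  have hL : L (fun i => (inner ℝ p (v i) : ℝ)) = L (fun i => (inner ℝ w_star (v i) : ℝ)) := by
    congr 1; funext i; exact hinner i
  have hΩle : Ω ‖w_star‖ ≤ Ω ‖p‖ := by
    have := hmin p
    rw [hL] at this
    linarith
  have hnle : ‖w_star‖ ≤ ‖p‖ := (hΩ.le_iff_le).mp hΩle
  have hzero : ‖w_star - p‖ = 0 := by
    have h1 : ‖w_star‖ ^ 2 ≤ ‖p‖ ^ 2 := by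
      apply pow_le_pow_left₀ (norm_nonneg _) hnle
    nlinarith [norm_nonneg (w_star - p), sq_nonneg (‖w_star - p‖)]
  have heq : w_star = p := sub_eq_zero.mp (norm_eq_zero.mp hzero)
  rw [heq]; exact hpS
end

section
/- Soft-margin SVM solution subspace: if (w,b) is an optimal solution of the soft-margin SVM with KKT multipliers α, then w lies in the span of {φ(xᵢ) : yᵢ(⟨w,φ(xᵢ)⟩+b) ≤ 1}, i.e. the span of the samples whose (negative) margin satisfies −yᵢ(⟨w,φ(xᵢ)⟩+b) ≥ −1. -/
open Finset

theorem svm_solution_in_span_of_low_margin_samples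
    {H : Type*} [NormedAddCommGroup H] [InnerProductSpace ℝ H]
    {N : ℕ} (φ : Fin N → H) (y : Fin N → ℝ) (hy : ∀ i, y i = 1 ∨ y i = -1)
    (w : H) (b : ℝ) (α : Fin N → ℝ)
    (hstat : w = ∑ i, (y i * α i) • φ i)
    (hzero : ∀ i, 1 < y i * ((inner ℝ w (φ i) : ℝ) + b) → α i = 0) :
    w ∈ Submodule.span ℝ {v : H | ∃ i, y i * ((inner ℝ w (φ i) : ℝ) + b) ≤ 1 ∧ v = φ i} := by
  have : (∑ i, (y i * α i) • φ i) ∈ Submodule.span ℝ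
      {v : H | ∃ i, y i * ((inner ℝ w (φ i) : ℝ) + b) ≤ 1 ∧ v = φ i} := by
    apply Submodule.sum_mem
    intro i _
    by_cases h : y i * ((inner ℝ w (φ i) : ℝ) + b) ≤ 1
    · exact Submodule.smul_mem _ _ (Submodule.subset_span ⟨i, h, rfl⟩)
    · rw [hzero i (lt_of_not_ge h), mul_zero, zero_smul]
      exact Submodule.zero_mem _
  exact hstat ▸ this
end

section
/- Monotonicity of Nyström approximation under subset inclusion: let K = ΦᵀΦ be PSD, and let S ⊆ T be index subsets such that both K(S,S) and K(T,T) are invertible. Then the Nyström approximations satisfy K̃_S ⪯ K̃_T ⪯ K in the Loewner order, where K̃_S = K(:,S)K(S,S)⁻¹K(S,:). -/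
open Matrix

private lemma aux_psd_conj {n d : ℕ} (Φ : Matrix (Fin d) (Fin n) ℝ)
    (M : Matrix (Fin d) (Fin d) ℝ) (hsym : Mᵀ = M) (hidem : M * M = M) :
    (Φᵀ * M * Φ).PosSemidef := by
  have h : Φᵀ * M * Φ = (M * Φ)ᴴ * (M * Φ) := by
    have h2 : (M * Φ)ᴴ = (M * Φ)ᵀ := by
      ext i j; simp [conjTranspose_apply]
    rw [h2, transpose_mul, hsym, ← Matrix.mul_assoc, Matrix.mul_assoc Φᵀ M M, hidem]
  rw [h]
  exact posSemidef_conjTranspose_mul_self _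

theorem nystrom_monotone_in_subset
    {N d : ℕ} (Φ : Matrix (Fin d) (Fin N) ℝ) (K : Matrix (Fin N) (Fin N) ℝ)
    (hK : K = Φᵀ * Φ)
    (S T : Finset (Fin N)) (hST : S ⊆ T)
    (hSinv : IsUnit (K.submatrix (fun i : {i // i ∈ S} => i.val) (fun i : {i // i ∈ S} => i.val)))
    (hTinv : IsUnit (K.submatrix (fun i : {i // i ∈ T} => i.val) (fun i : {i // i ∈ T} => i.val)))
    (KS KT : Matrix (Fin N) (Fin N) ℝ)
    (hKS : KS = K.submatrix id (fun i : {i // i ∈ S} => i.val) *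
      (K.submatrix (fun i : {i // i ∈ S} => i.val) (fun i : {i // i ∈ S} => i.val))⁻¹ *
      K.submatrix (fun i : {i // i ∈ S} => i.val) id)
    (hKT : KT = K.submatrix id (fun i : {i // i ∈ T} => i.val) *
      (K.submatrix (fun i : {i // i ∈ T} => i.val) (fun i : {i // i ∈ T} => i.val))⁻¹ *
      K.submatrix (fun i : {i // i ∈ T} => i.val) id) :
    (KT - KS).PosSemidef ∧ (K - KT).PosSemidef := by
  set fS : {i // i ∈ S} → Fin N := fun i => i.val with hfS
  set fT : {i // i ∈ T} → Fin N := fun i => i.val with hfT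
  set ΦS : Matrix (Fin d) {i // i ∈ S} ℝ := Φ.submatrix id fS with hΦS
  set ΦT : Matrix (Fin d) {i // i ∈ T} ℝ := Φ.submatrix id fT with hΦT
  have hKSS : K.submatrix fS fS = ΦSᵀ * ΦS := by
    ext i j; simp [hK, mul_apply, hΦS]
  have hKTT : K.submatrix fT fT = ΦTᵀ * ΦT := by
    ext i j; simp [hK, mul_apply, hΦT]
  have hKcolS : K.submatrix id fS = Φᵀ * ΦS := by
    ext i j; simp [hK, mul_apply, hΦS]
  have hKrowS : K.submatrix fS id = ΦSᵀ * Φ := by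
    ext i j; simp [hK, mul_apply, hΦS]
  have hKcolT : K.submatrix id fT = Φᵀ * ΦT := by
    ext i j; simp [hK, mul_apply, hΦT]
  have hKrowT : K.submatrix fT id = ΦTᵀ * Φ := by
    ext i j; simp [hK, mul_apply, hΦT]
  set AS := (K.submatrix fS fS)⁻¹ with hAS
  set AT := (K.submatrix fT fT)⁻¹ with hAT
  have hSdet : IsUnit (K.submatrix fS fS).det := (isUnit_iff_isUnit_det _).mp hSinv
  have hTdet : IsUnit (K.submatrix fT fT).det := (isUnit_iff_isUnit_det _).mp hTinv
  have hASl : AS * (K.submatrix fS fS) = 1 := nonsing_inv_mul _ hSdet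
  have hATl : AT * (K.submatrix fT fT) = 1 := nonsing_inv_mul _ hTdet
  have hKSSsym : (K.submatrix fS fS)ᵀ = K.submatrix fS fS := by
    rw [hKSS, transpose_mul, transpose_transpose]
  have hKTTsym : (K.submatrix fT fT)ᵀ = K.submatrix fT fT := by
    rw [hKTT, transpose_mul, transpose_transpose]
  have hASsym : ASᵀ = AS := by rw [hAS, transpose_nonsing_inv, hKSSsym]
  have hATsym : ATᵀ = AT := by rw [hAT, transpose_nonsing_inv, hKTTsym]
  set PS : Matrix (Fin d) (Fin d) ℝ := ΦS * AS * ΦSᵀ with hPS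
  set PT : Matrix (Fin d) (Fin d) ℝ := ΦT * AT * ΦTᵀ with hPT
  have hPSsym : PSᵀ = PS := by
    rw [hPS, transpose_mul, transpose_mul, transpose_transpose, hASsym, ← Matrix.mul_assoc]
  have hPTsym : PTᵀ = PT := by
    rw [hPT, transpose_mul, transpose_mul, transpose_transpose, hATsym, ← Matrix.mul_assoc]
  have hPSidem : PS * PS = PS := by
    rw [hPS]
    calc ΦS * AS * ΦSᵀ * (ΦS * AS * ΦSᵀ)
        = ΦS * (AS * (ΦSᵀ * ΦS)) * (AS * ΦSᵀ) := by simp only [Matrix.mul_assoc]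
      _ = ΦS * (1 : Matrix {i // i ∈ S} {i // i ∈ S} ℝ) * (AS * ΦSᵀ) := by rw [← hKSS, hASl]
      _ = ΦS * AS * ΦSᵀ := by rw [Matrix.mul_one, ← Matrix.mul_assoc]
  have hPTidem : PT * PT = PT := by
    rw [hPT]
    calc ΦT * AT * ΦTᵀ * (ΦT * AT * ΦTᵀ)
        = ΦT * (AT * (ΦTᵀ * ΦT)) * (AT * ΦTᵀ) := by simp only [Matrix.mul_assoc]
      _ = ΦT * (1 : Matrix {i // i ∈ T} {i // i ∈ T} ℝ) * (AT * ΦTᵀ) := by rw [← hKTT, hATl]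
      _ = ΦT * AT * ΦTᵀ := by rw [Matrix.mul_one, ← Matrix.mul_assoc]
  -- PT fixes the columns of ΦS
  have hPTΦT : PT * ΦT = ΦT := by
    rw [hPT]
    calc ΦT * AT * ΦTᵀ * ΦT = ΦT * (AT * (ΦTᵀ * ΦT)) := by simp only [Matrix.mul_assoc]
      _ = ΦT := by rw [← hKTT, hATl, Matrix.mul_one]
  have hPTΦS : PT * ΦS = ΦS := by
    have he : ∀ j : {i // i ∈ S}, (⟨j.val, hST j.2⟩ : {i // i ∈ T}) = ⟨j.val, hST j.2⟩ := fun _ => rfl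
    ext i j
    have : (PT * ΦS) i j = (PT * ΦT) i ⟨j.val, hST j.2⟩ := by
      simp [mul_apply, hΦS, hΦT, hfS, hfT]
    rw [this, hPTΦT]
    simp [hΦS, hΦT, hfS, hfT]
  have hPTPS : PT * PS = PS := by
    rw [hPS, ← Matrix.mul_assoc, ← Matrix.mul_assoc, hPTΦS]
  have hPSPT : PS * PT = PS := by
    have : (PT * PS)ᵀ = PS * PT := by rw [transpose_mul, hPSsym, hPTsym]
    rw [← this, hPTPS, hPSsym]
  have hKSeq : KS = Φᵀ * PS * Φ := by
    rw [hKS, hKcolS, hKrowS, hPS]; simp only [Matrix.mul_assoc]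
  have hKTeq : KT = Φᵀ * PT * Φ := by
    rw [hKT, hKcolT, hKrowT, hPT]; simp only [Matrix.mul_assoc]
  constructor
  · have hd : KT - KS = Φᵀ * (PT - PS) * Φ := by
      rw [hKSeq, hKTeq, Matrix.mul_sub, Matrix.sub_mul]
    rw [hd]
    apply aux_psd_conj
    · rw [transpose_sub, hPSsym, hPTsym]
    · rw [sub_mul, mul_sub, mul_sub, hPTidem, hPSidem, hPTPS, hPSPT, sub_self, sub_zero]
  · have hd : K - KT = Φᵀ * ((1 : Matrix (Fin d) (Fin d) ℝ) - PT) * Φ := by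
      rw [hK, hKTeq, Matrix.mul_sub, Matrix.mul_one, Matrix.sub_mul]
    rw [hd]
    apply aux_psd_conj
    · rw [transpose_sub, transpose_one, hPTsym]
    · rw [sub_mul, one_mul, mul_sub, mul_one, hPTidem, sub_self, sub_zero]
end
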